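/- Let U : ℝ → ℝ be continuous and strictly increasing. Then the following are equivalent: (i) there exists a function φ : ℝ × ℝ → ℝ such that for all x, a, b ∈ ℝ with b ≠ 0, U(x+a) − U(x) = φ(a,b)·(U(x+b) − U(x)); (ii) either there exist A, B ∈ ℝ such that U(x) = A·x + B for all x ∈ ℝ, or there exist A, B, C ∈ ℝ such that U(x) = A + B·exp(C·x) for all x ∈ ℝ. -/

import Mathlib

/-- Cauchy: a continuous additive function on ℝ is linear. -/
lemma cauchy_linear (f : ℝ → ℝ) (hf : Continuous f)
    (hadd : ∀ x y : ℝ, f (x + y) = f x + f y) : ∀ x : ℝ, f x = f 1 * x := by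
  let F : ℝ →+ ℝ := AddMonoidHom.mk' f hadd
  have hF : Continuous F := hf
  let L := F.toRealLinearMap hF
  intro x
  have h1 : L x = f x := congrFun (F.coe_toRealLinearMap hF) x
  have h2 : L 1 = f 1 := congrFun (F.coe_toRealLinearMap hF) 1
  have : L x = x • L 1 := by
    rw [← L.map_smul]; norm_num
  rw [← h1, this, h2, smul_eq_mul, mul_comm]

/-- Equivalence of items 2 and 4 in the characterization of utility functions
for which EUT policy optimization admits Markovian optimal policies:
a continuous strictly increasing `U : ℝ → ℝ` satisfies the translation-homogeneity
functional equation iff it is affine or exponential. -/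
theorem stmt_0 (U : ℝ → ℝ) (hU_cont : Continuous U) (hU_mono : StrictMono U) :
    (∃ φ : ℝ × ℝ → ℝ, ∀ x a b : ℝ, b ≠ 0 →
        U (x + a) - U x = φ (a, b) * (U (x + b) - U x)) ↔
    ((∃ A B : ℝ, ∀ x : ℝ, U x = A * x + B) ∨
      (∃ A B C : ℝ, ∀ x : ℝ, U x = A + B * Real.exp (C * x))) := by
  constructor
  · rintro ⟨φ, hφ⟩
    -- h0 > 0
    have h0pos : 0 < U 1 - U 0 := sub_pos.mpr (hU_mono zero_lt_one)
    obtain ⟨h0, hh0⟩ : ∃ h0 : ℝ, h0 = U 1 - U 0 := ⟨_, rfl⟩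
    rw [← hh0] at h0pos
    obtain ⟨g, hg⟩ : ∃ g : ℝ → ℝ, ∀ a, g a = (U a - U 0) / h0 := ⟨_, fun _ => rfl⟩
    -- key equation: U (x+a) - U x = g a * (U (x+1) - U x)
    have hkey : ∀ x a : ℝ, U (x + a) - U x = g a * (U (x + 1) - U x) := by
      intro x a
      have h1 := hφ x a 1 one_ne_zero
      have h2 := hφ 0 a 1 one_ne_zero
      simp only [zero_add] at h2
      rw [← hh0] at h2
      have : φ (a, 1) = g a := by
        rw [hg]
        field_simp
        linarith [h2]
      rw [h1, this]
    have hg0 : g 0 = 0 := by rw [hg]; simp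
    have hg1 : g 1 = 1 := by rw [hg, ← hh0]; field_simp
    have hgU : ∀ a : ℝ, U a = U 0 + g a * h0 := by
      intro a; rw [hg]; field_simp; ring
    -- H x := U(x+1) - U x ; relation H b = (g(b+1) - g b) * h0
    have hH : ∀ b : ℝ, U (b + 1) - U b = (g (b + 1) - g b) * h0 := by
      intro b
      have := hgU (b + 1); have := hgU b; nlinarith [hgU (b+1), hgU b]
    -- FF: g(a+b) = g b + g a * (g(b+1) - g b)
    have hF : ∀ a b : ℝ, g (a + b) = g b + g a * (g (b + 1) - g b) := by
      intro a b
      have h1 := hkey b a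
      rw [add_comm b a] at h1
      have h2 := hH b
      have h3 := hgU (a + b)
      have h4 := hgU b
      rw [h2] at h1
      have : g (a + b) * h0 = g b * h0 + g a * ((g (b + 1) - g b) * h0) := by
        nlinarith
      have h0ne : h0 ≠ 0 := ne_of_gt h0pos
      field_simp at this
      nlinarith [this]
    obtain ⟨c, hc⟩ : ∃ c : ℝ, c = g 2 - g 1 - 1 := ⟨_, rfl⟩
    -- k b = g(b+1) - g b = 1 + c * g b
    have hk : ∀ b : ℝ, g (b + 1) - g b = 1 + c * g b := by
      intro b
      have h1 := hF b 1
      have h2 := hF 1 b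
      rw [add_comm b 1] at h1
      -- h1 : g (1 + b) = g 1 + g b * (g 2 - g 1) ; note 1 + 1 = 2
      have h12 : (1 : ℝ) + 1 = 2 := by norm_num
      rw [h12] at h1
      rw [hg1] at h1 h2
      rw [hc]
      linear_combination h1 - h2 + g b * hg1
    have hFF : ∀ a b : ℝ, g (a + b) = g a + g b + c * g a * g b := by
      intro a b
      have := hF a b
      rw [hk b] at this
      ring_nf at this ⊢
      linarith [this]
    have hgcont : Continuous g := by
      have : g = fun a => (U a - U 0) / h0 := funext hg
      rw [this]
      exact (hU_cont.sub continuous_const).div_const _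
    by_cases hc0 : c = 0
    · -- additive case → affine
      left
      have hadd : ∀ x y : ℝ, g (x + y) = g x + g y := by
        intro x y; have := hFF x y; rw [hc0] at this; linarith
      have hlin := cauchy_linear g hgcont hadd
      refine ⟨h0, U 0, fun x => ?_⟩
      have := hgU x
      rw [hlin x, hg1] at this
      linarith [this]
    · -- multiplicative case → exponential
      right
      obtain ⟨G, hG⟩ : ∃ G : ℝ → ℝ, ∀ x, G x = 1 + c * g x := ⟨_, fun _ => rfl⟩
      have hGmul : ∀ a b : ℝ, G (a + b) = G a * G b := by
        intro a b
        rw [hG, hG, hG, hFF a b]; ring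
      have hG0 : G 0 = 1 := by rw [hG, hg0]; ring
      have hGne : ∀ x : ℝ, G x ≠ 0 := by
        intro x hx
        have := hGmul x (-x)
        rw [add_neg_cancel, hG0, hx, zero_mul] at this
        exact one_ne_zero this
      have hGpos : ∀ x : ℝ, 0 < G x := by
        intro x
        have h2 : G x = G (x/2) * G (x/2) := by
          rw [← hGmul]; norm_num
        rcases (hGne (x/2)).lt_or_gt with h | h <;> nlinarith
      have hGcont : Continuous G := by
        have : G = fun x => 1 + c * g x := funext hG
        rw [this]
        exact continuous_const.add (continuous_const.mul hgcont)
      obtain ⟨L, hL⟩ : ∃ L : ℝ → ℝ, ∀ x, L x = Real.log (G x) := ⟨_, fun _ => rfl⟩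
      have hLcont : Continuous L := by
        have : L = fun x => Real.log (G x) := funext hL
        rw [this]
        exact hGcont.log hGne
      have hLadd : ∀ x y : ℝ, L (x + y) = L x + L y := by
        intro x y
        rw [hL, hL, hL, hGmul, Real.log_mul (hGne x) (hGne y)]
      have hlin := cauchy_linear L hLcont hLadd
      refine ⟨U 0 - h0 / c, h0 / c, L 1, fun x => ?_⟩
      have hGx : G x = Real.exp (L 1 * x) := by
        rw [← hlin x, hL]
        exact (Real.exp_log (hGpos x)).symm
      have hGdef : G x = 1 + c * g x := hG x
      have hUx := hgU x
      rw [hUx]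
      rw [hGdef] at hGx
      field_simp
      nlinarith [hGx]
  · rintro (⟨A, B, hAB⟩ | ⟨A, B, C, hABC⟩)
    · refine ⟨fun p => p.1 / p.2, fun x a b hb => ?_⟩
      simp only [hAB]
      field_simp
      ring
    · have hC : C ≠ 0 := by
        intro h
        have := hU_mono zero_lt_one
        rw [hABC 0, hABC 1, h] at this
        simp at this
      refine ⟨fun p => (Real.exp (C * p.1) - 1) / (Real.exp (C * p.2) - 1), fun x a b hb => ?_⟩
      have hden : Real.exp (C * b) - 1 ≠ 0 := by
        intro h
        have : Real.exp (C * b) = 1 := by linarith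
        rw [Real.exp_eq_one_iff] at this
        exact (mul_ne_zero hC hb) this
      simp only [hABC]
      have e1 : Real.exp (C * (x + a)) = Real.exp (C * x) * Real.exp (C * a) := by
        rw [← Real.exp_add]; ring_nf
      have e2 : Real.exp (C * (x + b)) = Real.exp (C * x) * Real.exp (C * b) := by
        rw [← Real.exp_add]; ring_nf
      rw [e1, e2]
      field_simp
      ring
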